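/- The set E = {e^{iφ_n} : φ_n = c·∑_{k=n}^∞ 1/(k·log²k), n ≥ 2} ∪ {1}, with c^{-1} = ∑_{k=2}^∞ 1/(k·log²k), is closed in the unit circle and has Ahern–Clark type β(E) = 0. -/

import Mathlib

open MeasureTheory Metric Set Filter
open scoped Topology

instance : Fact ((0 : ℝ) < 1) := ⟨one_pos⟩

/-- Normalized Lebesgue measure `|E_x|` of the open `x`-neighborhood (in arc-length
distance) of a set on the unit circle, modelled as `ℝ/ℤ` (so `|T| = 1`). -/
noncomputable def nbd (E : Set (AddCircle (1 : ℝ))) (x : ℝ) : ℝ :=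
  (volume (Metric.thickening x E)).toReal

/-- The Ahern–Clark type `β(E) = sup {β ∈ ℝ : |E_x| = O(x^β), x → 0}`. -/
noncomputable def ACtype (E : Set (AddCircle (1 : ℝ))) : ℝ :=
  sSup {β : ℝ | (fun x => nbd E x) =O[𝓝[>] (0 : ℝ)] fun x => x ^ β}

/-- The normalizing constant `c` with `c⁻¹ = ∑_{k=2}^∞ 1/(k log² k)`. -/
noncomputable def c12 : ℝ :=
  (∑' k : ℕ, 1 / (((k : ℝ) + 2) * Real.log ((k : ℝ) + 2) ^ 2))⁻¹

/-- The angles `φ_n = c ∑_{k=n}^∞ 1/(k log² k)` (for `n ≥ 2`). -/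
noncomputable def φ12 (n : ℕ) : ℝ :=
  c12 * ∑' k : ℕ, 1 / (((n : ℝ) + (k : ℝ)) * Real.log ((n : ℝ) + (k : ℝ)) ^ 2)

/-- The set `E = {e^{iφ_n} : n ≥ 2} ∪ {1}`, viewed on the circle `ℝ/ℤ`
(the point `e^{iφ}` has normalized coordinate `φ / (2π)`). -/
noncomputable def E12 : Set (AddCircle (1 : ℝ)) :=
  {p | ∃ n : ℕ, 2 ≤ n ∧ p = ((φ12 n / (2 * Real.pi) : ℝ) : AddCircle (1 : ℝ))} ∪
    {((0 : ℝ) : AddCircle (1 : ℝ))}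

namespace AC12

noncomputable def FF (t : ℝ) : ℝ := 1 / (t * Real.log t ^ 2)

lemma log_pos_of_two_le {t : ℝ} (ht : 2 ≤ t) : 0 < Real.log t :=
  Real.log_pos (by linarith)

lemma FF_pos {t : ℝ} (ht : 2 ≤ t) : 0 < FF t := by
  have h := log_pos_of_two_le ht
  exact div_pos one_pos (by positivity)

lemma FF_antitone {s t : ℝ} (hs : 2 ≤ s) (hst : s ≤ t) : FF t ≤ FF s := by
  have hls := log_pos_of_two_le hs
  have hlt := log_pos_of_two_le (hs.trans hst)
  have hll : Real.log s ≤ Real.log t := Real.log_le_log (by linarith) hst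
  apply one_div_le_one_div_of_le (by positivity)
  have : Real.log s ^ 2 ≤ Real.log t ^ 2 := by nlinarith
  nlinarith

lemma log_diff_le {j : ℝ} (hj : 2 ≤ j) : Real.log (j+1) - Real.log j ≤ 1 / j := by
  have hj0 : (0:ℝ) < j := by linarith
  have h1 : Real.log (j+1) - Real.log j = Real.log ((j+1)/j) := by
    rw [Real.log_div (by linarith) (by linarith)]
  rw [h1]
  have := Real.log_le_sub_one_of_pos (show (0:ℝ) < (j+1)/j by positivity)
  have h2 : (j+1)/j - 1 = 1/j := by field_simp; ring
  linarith
lemma le_log_diff {j : ℝ} (hj : 2 ≤ j) : 1 / (j+1) ≤ Real.log (j+1) - Real.log j := by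
  have hj0 : (0:ℝ) < j := by linarith
  have h1 : Real.log j - Real.log (j+1) = Real.log (j/(j+1)) := by
    rw [Real.log_div (by linarith) (by linarith)]
  have := Real.log_le_sub_one_of_pos (show (0:ℝ) < j/(j+1) by positivity)
  have h2 : j/(j+1) - 1 = -(1/(j+1)) := by field_simp; ring
  linarith

lemma key_upper {j : ℝ} (hj : 2 ≤ j) : FF (j+1) ≤ 1/Real.log j - 1/Real.log (j+1) := by
  set A := Real.log j with hA
  set B := Real.log (j+1) with hB
  have hA0 : 0 < A := log_pos_of_two_le hj
  have hB0 : 0 < B := log_pos_of_two_le (by linarith)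
  have hAB : A ≤ B := Real.log_le_log (by linarith) (by linarith)
  have h1 : 1 ≤ (j+1) * (B - A) := by
    have h := le_log_diff hj
    rw [div_le_iff₀ (by linarith : (0:ℝ) < j+1)] at h
    nlinarith
  have heq : 1/A - 1/B = (B - A)/(A*B) := by field_simp
  rw [heq, FF, div_le_div_iff₀ (by positivity) (by positivity)]
  nlinarith [sq_nonneg B, mul_pos hB0 hB0]

lemma key_lower {j : ℝ} (hj : 2 ≤ j) : 1/Real.log j - 1/Real.log (j+1) ≤ FF j := by
  set A := Real.log j with hA
  set B := Real.log (j+1) with hB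
  have hA0 : 0 < A := log_pos_of_two_le hj
  have hB0 : 0 < B := log_pos_of_two_le (by linarith)
  have hAB : A ≤ B := Real.log_le_log (by linarith) (by linarith)
  have h1 : j * (B - A) ≤ 1 := by
    have h := log_diff_le hj
    rw [le_div_iff₀ (show (0:ℝ) < j by linarith)] at h
    nlinarith
  have heq : 1/A - 1/B = (B - A)/(A*B) := by field_simp
  rw [heq, FF, div_le_div_iff₀ (by positivity) (by positivity)]
  nlinarith [sq_nonneg A]


lemma two_le_cast_add {n k : ℕ} (hn : 2 ≤ n) : (2:ℝ) ≤ (n:ℝ) + (k:ℝ) := by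
  have h1 : (2:ℝ) ≤ (n:ℝ) := by exact_mod_cast hn
  have h2 : (0:ℝ) ≤ (k:ℝ) := Nat.cast_nonneg k
  linarith

lemma hsum2 : Summable (fun k : ℕ => FF ((k:ℝ) + 2)) := by
  rw [← summable_nat_add_iff 1]
  have hfe : (fun k : ℕ => 1/Real.log ((k:ℝ)+2) - 1/Real.log ((k:ℝ)+1+2))
      = (fun k : ℕ => (fun m : ℕ => 1/Real.log ((m:ℝ)+2)) k
        - (fun m : ℕ => 1/Real.log ((m:ℝ)+2)) (k+1)) := by
    funext k; push_cast; ring_nf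
  have hb : ∀ N : ℕ, ∑ k ∈ Finset.range N, FF ((↑(k+1):ℝ)+2) ≤ 1/Real.log 2 := by
    intro N
    have h1 : ∀ k ∈ Finset.range N, FF ((↑(k+1):ℝ)+2) ≤
        (1/Real.log ((k:ℝ)+2) - 1/Real.log ((k:ℝ)+1+2)) := by
      intro k _
      have h := key_upper (j := (k:ℝ)+2) (by nlinarith [Nat.cast_nonneg (α := ℝ) k])
      have e1 : ((↑(k+1):ℝ)+2) = (k:ℝ)+2+1 := by push_cast; ring
      have e2 : ((k:ℝ)+1+2) = (k:ℝ)+2+1 := by ring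
      rw [e1, e2]; exact h
    calc ∑ k ∈ Finset.range N, FF ((↑(k+1):ℝ)+2)
        ≤ ∑ k ∈ Finset.range N, (1/Real.log ((k:ℝ)+2) - 1/Real.log ((k:ℝ)+1+2)) :=
          Finset.sum_le_sum h1
      _ = 1/Real.log ((0:ℝ)+2) - 1/Real.log ((N:ℝ)+2) := by
          rw [hfe, Finset.sum_range_sub' (fun m : ℕ => 1/Real.log ((m:ℝ)+2)) N]
          norm_num
      _ ≤ 1/Real.log 2 := by
          have h3 : 0 < Real.log ((N:ℝ)+2) :=
            log_pos_of_two_le (two_le_cast_add (n := 2) (k := N) le_rfl |>.trans_eq (by push_cast; ring))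
          have h4 : 0 ≤ 1/Real.log ((N:ℝ)+2) := by positivity
          norm_num
          linarith
  exact summable_of_sum_range_le
    (fun k => (FF_pos (t := (↑(k+1):ℝ)+2) (by push_cast; nlinarith [Nat.cast_nonneg (α := ℝ) k])).le) hb

lemma tail_summable {n : ℕ} (hn : 2 ≤ n) : Summable (fun k : ℕ => FF ((n:ℝ) + (k:ℝ))) := by
  have := (summable_nat_add_iff (f := fun k : ℕ => FF ((k:ℝ)+2)) (n-2)).2 hsum2
  refine this.congr fun k => ?_
  congr 1
  push_cast [Nat.cast_sub hn]
  ring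

lemma telescope_hasSum {n : ℕ} (hn : 2 ≤ n) :
    HasSum (fun k : ℕ => 1/Real.log ((n:ℝ)+(k:ℝ)) - 1/Real.log ((n:ℝ)+(k:ℝ)+1))
      (1/Real.log (n:ℝ)) := by
  have hn2 : (2:ℝ) ≤ (n:ℝ) := by exact_mod_cast hn
  have hnonneg : ∀ k : ℕ, 0 ≤ 1/Real.log ((n:ℝ)+(k:ℝ)) - 1/Real.log ((n:ℝ)+(k:ℝ)+1) := by
    intro k
    have h1 : 0 < Real.log ((n:ℝ)+(k:ℝ)) := log_pos_of_two_le (two_le_cast_add hn)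
    have h2 : Real.log ((n:ℝ)+(k:ℝ)) ≤ Real.log ((n:ℝ)+(k:ℝ)+1) :=
      Real.log_le_log (by linarith [two_le_cast_add (n := n) (k := k) hn]) (by linarith)
    have := one_div_le_one_div_of_le h1 h2
    linarith
  have hfe : (fun k : ℕ => 1/Real.log ((n:ℝ)+(k:ℝ)) - 1/Real.log ((n:ℝ)+(k:ℝ)+1))
      = (fun k : ℕ => (fun m : ℕ => 1/Real.log ((n:ℝ)+(m:ℝ))) k
        - (fun m : ℕ => 1/Real.log ((n:ℝ)+(m:ℝ))) (k+1)) := by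
    funext k; push_cast; ring_nf
  have hpart : ∀ N : ℕ, ∑ k ∈ Finset.range N,
      (1/Real.log ((n:ℝ)+(k:ℝ)) - 1/Real.log ((n:ℝ)+(k:ℝ)+1))
      = 1/Real.log (n:ℝ) - 1/Real.log ((n:ℝ)+(N:ℝ)) := by
    intro N
    rw [hfe, Finset.sum_range_sub' (fun m : ℕ => 1/Real.log ((n:ℝ)+(m:ℝ))) N]
    norm_num
  have hsummable : Summable (fun k : ℕ =>
      1/Real.log ((n:ℝ)+(k:ℝ)) - 1/Real.log ((n:ℝ)+(k:ℝ)+1)) := by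
    apply summable_of_sum_range_le (c := 1/Real.log (n:ℝ)) hnonneg
    intro N
    rw [hpart N]
    have h3 : 0 < Real.log ((n:ℝ)+(N:ℝ)) := log_pos_of_two_le (two_le_cast_add hn)
    have h4 : 0 ≤ 1/Real.log ((n:ℝ)+(N:ℝ)) := by positivity
    linarith
  rw [hsummable.hasSum_iff_tendsto_nat]
  have h1 : Tendsto (fun N : ℕ => Real.log ((n:ℝ)+(N:ℝ))) atTop atTop :=
    Real.tendsto_log_atTop.comp (tendsto_atTop_add_const_left _ _ tendsto_natCast_atTop_atTop)
  have hlim : Tendsto (fun N : ℕ => 1/Real.log ((n:ℝ)+(N:ℝ))) atTop (𝓝 0) := by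
    simp only [one_div]; exact h1.inv_tendsto_atTop
  have h2 := (tendsto_const_nhds (x := 1/Real.log (n:ℝ)) (f := atTop (α := ℕ))).sub hlim
  rw [sub_zero] at h2
  exact h2.congr fun N => (hpart N).symm

lemma tail_lower {n : ℕ} (hn : 2 ≤ n) :
    1/Real.log (n:ℝ) ≤ ∑' k : ℕ, FF ((n:ℝ) + (k:ℝ)) := by
  rw [← (telescope_hasSum hn).tsum_eq]
  apply Summable.tsum_le_tsum _ (telescope_hasSum hn).summable (tail_summable hn)
  intro k
  exact key_lower (j := (n:ℝ)+(k:ℝ)) (two_le_cast_add hn)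

noncomputable def tail (n : ℕ) : ℝ := ∑' k : ℕ, FF ((n:ℝ) + (k:ℝ))

lemma phi_eq (n : ℕ) : φ12 n = c12 * tail n := rfl

lemma c12_unfold : c12 = (∑' k : ℕ, FF ((k:ℝ)+2))⁻¹ := rfl

lemma c12_eq : c12 = (tail 2)⁻¹ := by
  rw [c12_unfold]
  unfold tail
  congr 1
  exact tsum_congr fun k => by unfold FF; push_cast; ring_nf

lemma tail2_pos : 0 < tail 2 :=
  lt_of_lt_of_le (by positivity : (0:ℝ) < 1/Real.log 2) (by
    have h := tail_lower (n := 2) le_rfl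
    simpa [tail] using h)

lemma c12_pos : 0 < c12 := by rw [c12_eq]; exact inv_pos.2 tail2_pos

lemma tail_pos {n : ℕ} (hn : 2 ≤ n) : 0 < tail n := by
  refine lt_of_lt_of_le ?_ (tail_lower hn)
  have : (1:ℝ) < (n:ℝ) := by exact_mod_cast (by omega : 1 < n)
  have := Real.log_pos this
  positivity

lemma phi_pos {n : ℕ} (hn : 2 ≤ n) : 0 < φ12 n := by
  rw [phi_eq]; exact mul_pos c12_pos (tail_pos hn)

lemma tail_rec {n : ℕ} (hn : 2 ≤ n) : tail n = FF (n:ℝ) + tail (n+1) := by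
  unfold tail
  rw [Summable.tsum_eq_zero_add (tail_summable hn)]
  congr 1
  · norm_num
  · exact tsum_congr fun k => by push_cast; ring_nf

lemma gap_eq {n : ℕ} (hn : 2 ≤ n) : φ12 n - φ12 (n+1) = c12 * FF (n:ℝ) := by
  rw [phi_eq, phi_eq, tail_rec hn]; ring

lemma phi_two : φ12 2 = 1 := by
  rw [phi_eq, c12_eq, inv_mul_cancel₀ tail2_pos.ne']

lemma tail_le_tail2 {n : ℕ} (hn : 2 ≤ n) : tail n ≤ tail 2 := by
  obtain ⟨m, rfl⟩ : ∃ m, n = 2 + m := ⟨n - 2, by omega⟩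
  clear hn
  induction m with
  | zero => exact le_rfl
  | succ m ih =>
    have h2m : 2 ≤ 2 + m := by omega
    have := tail_rec h2m
    have hF := FF_pos (t := ((2+m : ℕ):ℝ)) (by exact_mod_cast h2m)
    have : tail (2 + (m+1)) ≤ tail (2+m) := by
      rw [show 2 + (m+1) = (2+m) + 1 from rfl]
      linarith
    linarith

lemma phi_le_one {n : ℕ} (hn : 2 ≤ n) : φ12 n ≤ 1 := by
  rw [← phi_two, phi_eq, phi_eq]
  exact mul_le_mul_of_nonneg_left (tail_le_tail2 hn) c12_pos.le

lemma phi_tendsto : Tendsto φ12 atTop (𝓝 0) := by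
  have hg := tendsto_sum_nat_add (fun k : ℕ => FF ((k:ℝ)+2))
  have htail : Tendsto tail atTop (𝓝 0) := by
    rw [← tendsto_add_atTop_iff_nat 2]
    refine hg.congr fun i => ?_
    exact tsum_congr fun k => by unfold FF; push_cast; ring_nf
  have := htail.const_mul c12
  rw [mul_zero] at this
  exact this.congr fun n => (phi_eq n).symm

lemma dist_coe_le (a b : ℝ) :
    dist ((a:ℝ) : AddCircle (1:ℝ)) ((b:ℝ) : AddCircle (1:ℝ)) ≤ |a - b| := by
  rw [dist_eq_norm, ← AddCircle.coe_sub]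
  simpa using (QuotientAddGroup.norm_mk_le_norm : ‖((a - b : ℝ) : AddCircle (1:ℝ))‖ ≤ ‖a - b‖)

lemma nbd_ge (E : Set (AddCircle (1:ℝ))) {x a : ℝ} (ha0 : 0 ≤ a) (ha1 : a ≤ 1)
    (h : ∀ t ∈ Ioo (0:ℝ) a, ((t:ℝ) : AddCircle (1:ℝ)) ∈ Metric.thickening x E) :
    a ≤ nbd E x := by
  have hms : MeasurableSet (Metric.thickening x E) := isOpen_thickening.measurableSet
  have hmp := (AddCircle.measurePreserving_mk 1 0).measure_preimage hms.nullMeasurableSet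
  have hsub : Ioo (0:ℝ) a ⊆ ((↑) : ℝ → AddCircle (1:ℝ)) ⁻¹' Metric.thickening x E :=
    fun t ht => h t ht
  have h1 : (volume.restrict (Ioc (0:ℝ) (0+1))) (Ioo (0:ℝ) a)
      ≤ (volume.restrict (Ioc (0:ℝ) (0+1))) (((↑) : ℝ → AddCircle (1:ℝ)) ⁻¹' Metric.thickening x E) :=
    measure_mono hsub
  rw [Measure.restrict_apply measurableSet_Ioo, hmp] at h1
  have h2 : Ioo (0:ℝ) a ∩ Ioc 0 (0+1) = Ioo (0:ℝ) a := by
    rw [inter_eq_left]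
    intro t ht
    exact ⟨ht.1, by linarith [ht.2]⟩
  rw [h2, Real.volume_Ioo, sub_zero] at h1
  have h3 : (ENNReal.ofReal a).toReal ≤ (volume (Metric.thickening x E)).toReal :=
    ENNReal.toReal_mono (measure_ne_top _ _) h1
  rwa [ENNReal.toReal_ofReal ha0] at h3

lemma nbd_le_one (E : Set (AddCircle (1:ℝ))) (x : ℝ) : nbd E x ≤ 1 := by
  unfold nbd
  have h1 : volume (Metric.thickening x E) ≤ volume (univ : Set (AddCircle (1:ℝ))) :=
    measure_mono (subset_univ _)
  rw [AddCircle.measure_univ] at h1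
  calc (volume (Metric.thickening x E)).toReal ≤ (ENNReal.ofReal (1:ℝ)).toReal :=
        ENNReal.toReal_mono (by simp) h1
    _ = 1 := by simp

lemma nbd_nonneg (E : Set (AddCircle (1:ℝ))) (x : ℝ) : 0 ≤ nbd E x := ENNReal.toReal_nonneg

lemma E12_closed : IsClosed E12 := by
  have key : Tendsto (fun m : ℕ => φ12 (m+2) / (2*Real.pi)) atTop (𝓝 0) := by
    have := (phi_tendsto.comp (tendsto_add_atTop_nat 2)).div_const (2*Real.pi)
    simpa using this
  have hcomp : IsCompact (insert (0:ℝ) (range fun m : ℕ => φ12 (m+2)/(2*Real.pi))) :=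
    key.isCompact_insert_range
  have himg : IsClosed (((↑) : ℝ → AddCircle (1:ℝ)) ''
      (insert (0:ℝ) (range fun m : ℕ => φ12 (m+2)/(2*Real.pi)))) :=
    (hcomp.image (AddCircle.continuous_mk' 1)).isClosed
  have : E12 = ((↑) : ℝ → AddCircle (1:ℝ)) ''
      (insert (0:ℝ) (range fun m : ℕ => φ12 (m+2)/(2*Real.pi))) := by
    ext p
    simp only [E12, mem_union, mem_setOf_eq, mem_singleton_iff, image_insert_eq, mem_insert_iff,
      ← range_comp, mem_range, Function.comp]
    constructor
    · rintro (⟨n, hn, rfl⟩ | rfl)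
      · exact Or.inr ⟨n - 2, by rw [Nat.sub_add_cancel hn]⟩
      · exact Or.inl rfl
    · rintro (rfl | ⟨m, rfl⟩)
      · exact Or.inr rfl
      · exact Or.inl ⟨m+2, by omega, rfl⟩
  rw [this]
  exact himg

lemma cover {n : ℕ} (hn : 2 ≤ n) :
    φ12 n / (2*Real.pi) ≤ nbd E12 (c12 * FF (n:ℝ) / Real.pi) := by
  have hpi := Real.pi_pos
  have hpi1 : (1:ℝ) ≤ 2*Real.pi := by nlinarith [Real.pi_gt_three]
  have hn2 : (2:ℝ) ≤ (n:ℝ) := by exact_mod_cast hn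
  have hFn := FF_pos hn2
  have hxpos : 0 < c12 * FF (n:ℝ) / Real.pi := by
    have := c12_pos; positivity
  apply nbd_ge
  · exact div_nonneg (phi_pos hn).le (by linarith)
  · rw [div_le_one (by linarith)]
    exact (phi_le_one hn).trans hpi1
  intro t ht
  set t' := 2*Real.pi*t with ht'def
  have ht'1 : 0 < t' := by have := ht.1; positivity
  have ht'2 : t' < φ12 n := by
    have := ht.2
    rw [lt_div_iff₀ (by linarith : (0:ℝ) < 2*Real.pi)] at this
    rw [ht'def]; linarith
  have hev : ∀ᶠ j in atTop, φ12 j < t' := phi_tendsto.eventually_lt_const ht'1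
  obtain ⟨N, hN⟩ := eventually_atTop.1 hev
  have hP : ∃ m : ℕ, φ12 (n+m+1) < t' := ⟨N, hN _ (by omega)⟩
  set m0 := Nat.find hP with hm0
  have hk1 : φ12 (n+m0+1) < t' := Nat.find_spec hP
  have hk2 : t' ≤ φ12 (n+m0) := by
    rcases Nat.eq_zero_or_pos m0 with h0 | h0
    · rw [h0, Nat.add_zero]; exact ht'2.le
    · have hmin := Nat.find_min hP (m := m0 - 1) (by omega)
      push_neg at hmin
      have : n + (m0-1) + 1 = n + m0 := by omega
      rwa [this] at hmin
  set k := n + m0 with hkdef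
  have hkn : 2 ≤ k := by omega
  have hkn2 : (n:ℝ) ≤ (k:ℝ) := by exact_mod_cast (by omega : n ≤ k)
  -- the point of E12 we are close to
  have hzE : ((φ12 k / (2*Real.pi) : ℝ) : AddCircle (1:ℝ)) ∈ E12 :=
    Or.inl ⟨k, hkn, rfl⟩
  rw [Metric.mem_thickening_iff]
  refine ⟨_, hzE, ?_⟩
  have hd := dist_coe_le t (φ12 k / (2*Real.pi))
  have h1 : t ≤ φ12 k / (2*Real.pi) := by
    rw [le_div_iff₀ (by linarith : (0:ℝ) < 2*Real.pi)]
    rw [ht'def] at hk2; linarith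
  have h2 : φ12 (k+1) / (2*Real.pi) < t := by
    rw [div_lt_iff₀ (by linarith : (0:ℝ) < 2*Real.pi)]
    rw [ht'def] at hk1
    have : φ12 (n+m0+1) = φ12 (k+1) := by rw [hkdef]
    linarith [this ▸ hk1]
  have hgap : φ12 k - φ12 (k+1) = c12 * FF (k:ℝ) := gap_eq hkn
  have hFle : FF (k:ℝ) ≤ FF (n:ℝ) := FF_antitone hn2 hkn2
  have habs : |t - φ12 k / (2*Real.pi)| = φ12 k / (2*Real.pi) - t := by
    rw [abs_sub_comm, abs_of_nonneg (by linarith)]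
  have hlt : |t - φ12 k / (2*Real.pi)| < c12 * FF (n:ℝ) / Real.pi := by
    rw [habs]
    have hc := c12_pos
    have step1 : φ12 k / (2*Real.pi) - t < (c12 * FF (k:ℝ)) / (2*Real.pi) := by
      rw [← hgap]
      have := sub_div (φ12 k) (φ12 (k+1)) (2*Real.pi)
      rw [this]
      linarith
    have step2 : (c12 * FF (k:ℝ)) / (2*Real.pi) ≤ (c12 * FF (n:ℝ)) / (2*Real.pi) := by
      apply div_le_div_of_nonneg_right (by nlinarith) (by linarith)
    have step3 : (c12 * FF (n:ℝ)) / (2*Real.pi) < c12 * FF (n:ℝ) / Real.pi := by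
      apply div_lt_div_of_pos_left (by positivity) (by linarith) (by linarith)
    linarith
  exact lt_of_le_of_lt hd hlt

lemma zero_mem_S : (fun x => nbd E12 x) =O[𝓝[>] (0:ℝ)] fun x : ℝ => x ^ (0:ℝ) := by
  apply Asymptotics.IsBigO.of_bound 1
  filter_upwards [self_mem_nhdsWithin] with x hx
  have hx0 : (0:ℝ) < x := hx
  rw [Real.rpow_zero]
  simp only [Real.norm_eq_abs, abs_one, mul_one]
  rw [abs_of_nonneg (nbd_nonneg _ _)]
  exact nbd_le_one _ _

lemma neg_of_mem_S {β : ℝ} (hβ : (fun x => nbd E12 x) =O[𝓝[>] (0:ℝ)] fun x : ℝ => x ^ β) :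
    β ≤ 0 := by
  by_contra hβ0
  push_neg at hβ0
  obtain ⟨C, hC, hbound⟩ := hβ.exists_pos
  rw [Asymptotics.isBigOWith_iff] at hbound
  have hpi := Real.pi_pos
  have hc12 := c12_pos
  have hlog2 := Real.log_pos (by norm_num : (1:ℝ) < 2)
  set C' := c12 / (Real.pi * Real.log 2 ^ 2) with hC'def
  have hC' : 0 < C' := by positivity
  set xx : ℕ → ℝ := fun n => c12 * FF (n:ℝ) / Real.pi with hxxdef
  have hxx_pos : ∀ n : ℕ, 2 ≤ n → 0 < xx n := by
    intro n hn
    have := FF_pos (t := (n:ℝ)) (by exact_mod_cast hn)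
    positivity
  have hxx_le : ∀ n : ℕ, 2 ≤ n → xx n ≤ C' / n := by
    intro n hn
    have hn2 : (2:ℝ) ≤ (n:ℝ) := by exact_mod_cast hn
    have hln : Real.log 2 ≤ Real.log (n:ℝ) := Real.log_le_log (by norm_num) hn2
    have hlnpos : 0 < Real.log (n:ℝ) := lt_of_lt_of_le hlog2 hln
    have hFF : FF (n:ℝ) ≤ 1 / ((n:ℝ) * Real.log 2 ^ 2) := by
      apply one_div_le_one_div_of_le (by positivity)
      have : Real.log 2 ^ 2 ≤ Real.log (n:ℝ) ^ 2 := by nlinarith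
      nlinarith
    rw [hxxdef]
    have : c12 * FF (n:ℝ) ≤ c12 * (1 / ((n:ℝ) * Real.log 2 ^ 2)) :=
      mul_le_mul_of_nonneg_left hFF hc12.le
    rw [div_le_div_iff₀ hpi (by positivity : (0:ℝ) < (n:ℝ))]
    rw [hC'def]
    have hn0 : (0:ℝ) < (n:ℝ) := by linarith
    rw [div_mul_eq_mul_div, le_div_iff₀ (by positivity)]
    calc c12 * FF (n:ℝ) * (n:ℝ) * (Real.pi * Real.log 2 ^ 2)
        ≤ c12 * (1 / ((n:ℝ) * Real.log 2 ^ 2)) * (n:ℝ) * (Real.pi * Real.log 2 ^ 2) := by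
          apply mul_le_mul_of_nonneg_right (mul_le_mul_of_nonneg_right this hn0.le) (by positivity)
      _ = c12 * Real.pi := by field_simp
  have hxx_tendsto : Tendsto xx atTop (𝓝 0) := by
    apply squeeze_zero' (Filter.eventually_atTop.2 ⟨2, fun n hn => (hxx_pos n hn).le⟩)
      (Filter.eventually_atTop.2 ⟨2, fun n hn => hxx_le n hn⟩)
    have := tendsto_one_div_atTop_nhds_zero_nat.const_mul C'
    rw [mul_zero] at this
    exact this.congr fun n => by rw [mul_one_div]
  have hxx_in : Tendsto xx atTop (𝓝[>] (0:ℝ)) :=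
    tendsto_nhdsWithin_of_tendsto_nhds_of_eventually_within _ hxx_tendsto
      (Filter.eventually_atTop.2 ⟨2, fun n hn => hxx_pos n hn⟩)
  have hevB := hxx_in.eventually hbound
  -- lower bound on nbd along xx
  have hlow : ∀ n : ℕ, 2 ≤ n → c12 * (1/Real.log (n:ℝ)) / (2*Real.pi) ≤ nbd E12 (xx n) := by
    intro n hn
    refine le_trans ?_ (cover hn)
    apply div_le_div_of_nonneg_right ?_ (by linarith)
    rw [phi_eq]
    exact mul_le_mul_of_nonneg_left (tail_lower hn) hc12.le
  -- RHS tendsto 0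
  have hrhs : Tendsto (fun n : ℕ => C * ((C'/(n:ℝ)) ^ β * Real.log (n:ℝ))) atTop (𝓝 0) := by
    have hdiv : Tendsto (fun y : ℝ => Real.log y / y ^ β) atTop (𝓝 0) :=
      (isLittleO_log_rpow_atTop hβ0).tendsto_div_nhds_zero
    have hcomp : Tendsto (fun n : ℕ => Real.log (n:ℝ) / (n:ℝ) ^ β) atTop (𝓝 0) :=
      hdiv.comp tendsto_natCast_atTop_atTop
    have := hcomp.const_mul (C * C' ^ β)
    rw [mul_zero] at this
    refine this.congr fun n => ?_
    rw [Real.div_rpow hC'.le (Nat.cast_nonneg n)]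
    ring
  have hfinal : ∀ᶠ n : ℕ in atTop, C * ((C'/(n:ℝ)) ^ β * Real.log (n:ℝ)) < c12 / (2*Real.pi) :=
    hrhs.eventually_lt_const (by positivity)
  -- combine
  have hcontra : ∀ᶠ n : ℕ in atTop, False := by
    filter_upwards [hevB, hfinal, Filter.eventually_atTop.2 ⟨2, fun (n:ℕ) (hn : 2 ≤ n) => hn⟩]
      with n hB hF hn
    have hn2 : (2:ℝ) ≤ (n:ℝ) := by exact_mod_cast hn
    have hln : 0 < Real.log (n:ℝ) := log_pos_of_two_le hn2
    have hxp := hxx_pos n hn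
    rw [Real.norm_eq_abs, Real.norm_eq_abs, abs_of_nonneg (nbd_nonneg _ _),
      abs_of_nonneg (Real.rpow_nonneg hxp.le β)] at hB
    have h1 : c12 * (1/Real.log (n:ℝ)) / (2*Real.pi) ≤ C * xx n ^ β :=
      (hlow n hn).trans hB
    have h2 : xx n ^ β ≤ (C'/(n:ℝ)) ^ β := by
      apply Real.rpow_le_rpow hxp.le (hxx_le n hn) hβ0.le
    have h3 : C * xx n ^ β ≤ C * (C'/(n:ℝ)) ^ β := mul_le_mul_of_nonneg_left h2 hC.le
    have h4 : c12 / (2*Real.pi) ≤ C * (C'/(n:ℝ)) ^ β * Real.log (n:ℝ) := by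
      have := mul_le_mul_of_nonneg_right (h1.trans h3) hln.le
      calc c12 / (2*Real.pi) = c12 * (1/Real.log (n:ℝ)) / (2*Real.pi) * Real.log (n:ℝ) := by
            field_simp
        _ ≤ C * (C'/(n:ℝ)) ^ β * Real.log (n:ℝ) := this
    have hF' : C * (C'/(n:ℝ)) ^ β * Real.log (n:ℝ) < c12 / (2*Real.pi) := by
      rw [mul_assoc]; exact hF
    linarith
  exact hcontra.exists.choose_spec

end AC12

theorem stmt12 : IsClosed E12 ∧ ACtype E12 = 0 := by
  refine ⟨AC12.E12_closed, ?_⟩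
  unfold ACtype
  apply le_antisymm
  · exact csSup_le ⟨0, AC12.zero_mem_S⟩ (fun β hβ => AC12.neg_of_mem_S hβ)
  · exact le_csSup ⟨0, fun β hβ => AC12.neg_of_mem_S hβ⟩ AC12.zero_mem_S
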